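/- arXiv:1804.06156 — 2 statements merged into one kernel-verified Lean document; each statement's English description precedes it below -/
import Mathlib

section
/- Let α ∈ R⁺ and let β ∈ Δ(α) be such that (α,β) < 0 and n_β(α) = 1. Then there exists α' ∈ R⁺ such that α' ≤ α, (α',β) > 0, and (α,α') = 0. -/
/- Setting: a reduced, irreducible, crystallographic, simply laced root system `roots`
in a real inner product space `V`, with a fixed base `base` of simple roots,
its Weyl group (generated by the reflections in the simple roots), the length
function, the (strong) Bruhat order, the weak left Bruhat order, the sets
`A_ℓ(v)`, `A(v)`, `D(w)`, `AD(v,w)`, and the partial order on roots induced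
by the base. -/

open scoped InnerProductSpace Classical

noncomputable section

variable {V : Type*} [NormedAddCommGroup V] [InnerProductSpace ℝ V]

/-- The underlying linear map of the reflection `s_α : x ↦ x - (2⟪x,α⟫/⟪α,α⟫) α`. -/
def reflMap (α : V) : V →ₗ[ℝ] V where
  toFun x := x - (2 * ⟪x, α⟫_ℝ / ⟪α, α⟫_ℝ) • α
  map_add' x y := by
    simp only [inner_add_left]
    rw [show 2 * (⟪x, α⟫_ℝ + ⟪y, α⟫_ℝ) / ⟪α, α⟫_ℝ
        = 2 * ⟪x, α⟫_ℝ / ⟪α, α⟫_ℝ + 2 * ⟪y, α⟫_ℝ / ⟪α, α⟫_ℝ by ring]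
    rw [add_smul]
    abel
  map_smul' c x := by
    simp only [real_inner_smul_left, RingHom.id_apply, smul_sub, smul_smul]
    rw [show 2 * (c * ⟪x, α⟫_ℝ) / ⟪α, α⟫_ℝ = c * (2 * ⟪x, α⟫_ℝ / ⟪α, α⟫_ℝ) by ring]

theorem reflMap_involutive (α : V) : Function.Involutive (reflMap α) := by
  intro x
  by_cases h : (⟪α, α⟫_ℝ) = (0 : ℝ)
  · have hα : α = 0 := inner_self_eq_zero.mp h
    simp [reflMap, hα]
  · show reflMap α (x - (2 * ⟪x, α⟫_ℝ / ⟪α, α⟫_ℝ) • α) = x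
    show (x - (2 * ⟪x, α⟫_ℝ / ⟪α, α⟫_ℝ) • α)
        - (2 * ⟪x - (2 * ⟪x, α⟫_ℝ / ⟪α, α⟫_ℝ) • α, α⟫_ℝ / ⟪α, α⟫_ℝ) • α = x
    have h1 : ⟪x - (2 * ⟪x, α⟫_ℝ / ⟪α, α⟫_ℝ) • α, α⟫_ℝ = -⟪x, α⟫_ℝ := by
      rw [inner_sub_left, real_inner_smul_left]
      field_simp
      ring
    rw [h1, show 2 * -⟪x, α⟫_ℝ / ⟪α, α⟫_ℝ = -(2 * ⟪x, α⟫_ℝ / ⟪α, α⟫_ℝ) by ring,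
      neg_smul, sub_neg_eq_add, sub_add_cancel]

/-- The reflection `s_α` in the hyperplane orthogonal to `α`,
as a linear automorphism of `V`. -/
def sRefl (α : V) : V ≃ₗ[ℝ] V := LinearEquiv.ofInvolutive (reflMap α) (reflMap_involutive α)

/-- A reduced, irreducible, crystallographic, simply laced root system in the real
inner product space `V`, together with a choice of base (system of simple roots)
and the corresponding coordinate function `coeff α β = n_β(α)`. -/
structure SimplyLacedRootSystem (V : Type*) [NormedAddCommGroup V]
    [InnerProductSpace ℝ V] : Type _ where
  /-- the set `R` of roots -/
  roots : Set V
  /-- the base `Δ` of simple roots -/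
  base : Finset V
  finite : roots.Finite
  nonzero : ∀ α ∈ roots, α ≠ 0
  span_eq_top : Submodule.span ℝ roots = ⊤
  /-- the root system is reduced -/
  reduced : ∀ α ∈ roots, ∀ t : ℝ, t • α ∈ roots → t = 1 ∨ t = -1
  /-- the root system is crystallographic: all `⟨γ,α⟩ = 2(γ,α)/(α,α)` are integers -/
  crystallographic : ∀ α ∈ roots, ∀ γ ∈ roots, ∃ n : ℤ, 2 * ⟪γ, α⟫_ℝ / ⟪α, α⟫_ℝ = (n : ℝ)
  reflect_mem : ∀ α ∈ roots, ∀ γ ∈ roots, sRefl α γ ∈ roots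
  /-- the root system is simply laced: all roots have the same length -/
  simplyLaced : ∀ α ∈ roots, ∀ γ ∈ roots, ⟪α, α⟫_ℝ = ⟪γ, γ⟫_ℝ
  /-- the root system is irreducible -/
  irreducible : ∀ R₁ R₂ : Set V, R₁ ∪ R₂ = roots →
    (∀ α ∈ R₁, ∀ γ ∈ R₂, ⟪α, γ⟫_ℝ = 0) → R₁ = ∅ ∨ R₂ = ∅
  base_subset : ↑base ⊆ roots
  base_indep : LinearIndependent ℝ (Subtype.val : {x : V // x ∈ base} → V)
  /-- `coeff α β` is the coefficient `n_β(α)` of the simple root `β` in `α` -/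
  coeff : V → V → ℝ
  coeff_spec : ∀ α ∈ roots, α = ∑ β ∈ base, coeff α β • β
  coeff_int : ∀ α ∈ roots, ∀ β ∈ base, ∃ n : ℤ, coeff α β = (n : ℝ)
  coeff_sign : ∀ α ∈ roots, (∀ β ∈ base, 0 ≤ coeff α β) ∨ (∀ β ∈ base, coeff α β ≤ 0)

namespace SimplyLacedRootSystem

variable (P : SimplyLacedRootSystem V)

/-- The set `R⁺` of positive roots. -/
def pos : Set V := {α ∈ P.roots | ∀ β ∈ P.base, 0 ≤ P.coeff α β}

/-- The support `Δ(α) = {β ∈ Δ : n_β(α) > 0}` of a (positive) root `α`. -/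
def support (α : V) : Finset V := P.base.filter (fun β => 0 < P.coeff α β)

/-- `N⁺(α,β) = {β' ∈ Δ(α) : (β,β') < 0 and (α,β') > 0}`. -/
def Nplus (α β : V) : Finset V :=
  (P.support α).filter (fun β' => ⟪β, β'⟫_ℝ < 0 ∧ 0 < ⟪α, β'⟫_ℝ)

/-- `N⁻(α,β) = {β' ∈ Δ(α) : (β,β') < 0 and (α,β') ≤ 0}`. -/
def Nminus (α β : V) : Finset V :=
  (P.support α).filter (fun β' => ⟪β, β'⟫_ℝ < 0 ∧ ⟪α, β'⟫_ℝ ≤ 0)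

/-- The partial order on `V` induced by the base: `x ≤ y` iff `y - x` is a
nonnegative linear combination of the simple roots. -/
def rle (x y : V) : Prop :=
  ∃ c : V → ℝ, (∀ β, 0 ≤ c β) ∧ y - x = ∑ β ∈ P.base, c β • β

/-- The strict version of the partial order `rle` on roots. -/
def rlt (x y : V) : Prop := P.rle x y ∧ x ≠ y

/-- `α` is a minimal element of the set `S` with respect to the partial order on roots. -/
def IsMinimalIn (α : V) (S : Set V) : Prop := α ∈ S ∧ ∀ γ ∈ S, ¬ P.rlt γ α

/-- The Weyl group `W`, i.e. the subgroup of `GL(V)` generated by the reflections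
in the simple roots (equivalently, by all the reflections `s_α`, `α ∈ R`). -/
def weyl : Subgroup (V ≃ₗ[ℝ] V) := Subgroup.closure (sRefl '' ↑P.base)

/-- The length function `ℓ` of `W` with respect to the simple reflections. -/
def len (w : V ≃ₗ[ℝ] V) : ℕ :=
  sInf {n | ∃ l : List V, l.length = n ∧ (∀ β ∈ l, β ∈ P.base) ∧ (l.map sRefl).prod = w}

/-- One step in the Bruhat order: multiplication by the reflection of a positive
root which increases the length. -/
def bStep (u w : V ≃ₗ[ℝ] V) : Prop :=
  ∃ α ∈ P.pos, w = sRefl α * u ∧ P.len u < P.len w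

/-- The (strong) Bruhat order `≤` on `W`. -/
def ble : (V ≃ₗ[ℝ] V) → (V ≃ₗ[ℝ] V) → Prop := Relation.ReflTransGen P.bStep

/-- The strict (strong) Bruhat order `<` on `W`. -/
def blt (u w : V ≃ₗ[ℝ] V) : Prop := P.ble u w ∧ u ≠ w

/-- The covering relation `⋖` of the Bruhat order. -/
def bcov (u w : V ≃ₗ[ℝ] V) : Prop := P.blt u w ∧ P.len w = P.len u + 1

/-- One step in the weak left Bruhat order. -/
def wlStep (u w : V ≃ₗ[ℝ] V) : Prop :=
  ∃ β ∈ P.base, w = sRefl β * u ∧ P.len u < P.len w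

/-- The weak left Bruhat order `≤_ℓ` on `W`. -/
def wle : (V ≃ₗ[ℝ] V) → (V ≃ₗ[ℝ] V) → Prop := Relation.ReflTransGen P.wlStep

/-- `A_ℓ(v) = {β ∈ Δ : v < s_β v}`. -/
def Al (v : V ≃ₗ[ℝ] V) : Set V := {β : V | β ∈ P.base ∧ P.blt v (sRefl β * v)}

/-- `A(v) = {α ∈ R⁺ : v⁻¹(α) > 0}`. -/
def A (v : V ≃ₗ[ℝ] V) : Set V := {α ∈ P.pos | v⁻¹ α ∈ P.pos}

/-- `D(w) = {α ∈ R⁺ : w⁻¹(α) < 0}`. -/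
def Dset (w : V ≃ₗ[ℝ] V) : Set V := {α ∈ P.pos | -(w⁻¹ α) ∈ P.pos}

/-- `AD(v,w) = A(v) ∩ D(w)`. -/
def ADset (v w : V ≃ₗ[ℝ] V) : Set V := P.A v ∩ P.Dset w

end SimplyLacedRootSystem

namespace SimplyLacedRootSystem

variable (P : SimplyLacedRootSystem V)

lemma inner_self_pos' {α : V} (h : α ∈ P.roots) : 0 < ⟪α, α⟫_ℝ :=
  lt_of_le_of_ne real_inner_self_nonneg
    (fun h' => P.nonzero α h (inner_self_eq_zero.mp h'.symm))

lemma sRefl_apply' (γ x : V) : sRefl γ x = x - (2 * ⟪x, γ⟫_ℝ / ⟪γ, γ⟫_ℝ) • γ := rfl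

lemma neg_mem' {α : V} (h : α ∈ P.roots) : -α ∈ P.roots := by
  have h2 := P.reflect_mem α h α h
  rw [sRefl_apply'] at h2
  rw [show 2 * ⟪α, α⟫_ℝ / ⟪α, α⟫_ℝ = 2 by
    field_simp [(P.inner_self_pos' h).ne']; exact div_self (P.inner_self_pos' h).ne'] at h2
  rw [show α - (2:ℝ) • α = -α by rw [two_smul]; abel] at h2
  exact h2

lemma sub_mem' {α γ : V} (hα : α ∈ P.roots) (hγ : γ ∈ P.roots)
    (h : ⟪α, γ⟫_ℝ = ⟪γ, γ⟫_ℝ / 2) : α - γ ∈ P.roots := by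
  have h2 := P.reflect_mem γ hγ α hα
  rw [sRefl_apply'] at h2
  rw [show 2 * ⟪α, γ⟫_ℝ / ⟪γ, γ⟫_ℝ = 1 by
    rw [h]; field_simp [(P.inner_self_pos' hγ).ne']; exact div_self (P.inner_self_pos' hγ).ne', one_smul] at h2
  exact h2

lemma add_mem' {α γ : V} (hα : α ∈ P.roots) (hγ : γ ∈ P.roots)
    (h : ⟪α, γ⟫_ℝ = -(⟪γ, γ⟫_ℝ / 2)) : α + γ ∈ P.roots := by
  have h2 := P.reflect_mem γ hγ α hα
  rw [sRefl_apply'] at h2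
  rw [show 2 * ⟪α, γ⟫_ℝ / ⟪γ, γ⟫_ℝ = -1 by
    rw [h]; field_simp [(P.inner_self_pos' hγ).ne']; rw [div_self (P.inner_self_pos' hγ).ne'], neg_one_smul,
    sub_neg_eq_add] at h2
  exact h2

/-- Trichotomy for inner products of non-proportional roots in the simply laced case. -/
lemma inner_trichot {α γ : V} (hα : α ∈ P.roots) (hγ : γ ∈ P.roots)
    (h1 : α ≠ γ) (h2 : α ≠ -γ) :
    ⟪α, γ⟫_ℝ = -(⟪γ, γ⟫_ℝ / 2) ∨ ⟪α, γ⟫_ℝ = 0 ∨ ⟪α, γ⟫_ℝ = ⟪γ, γ⟫_ℝ / 2 := by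
  obtain ⟨m, hm⟩ := P.crystallographic γ hγ α hα
  have hγγ : 0 < ⟪γ, γ⟫_ℝ := P.inner_self_pos' hγ
  have hsame : ⟪α, α⟫_ℝ = ⟪γ, γ⟫_ℝ := P.simplyLaced α hα γ hγ
  have hval : ⟪α, γ⟫_ℝ = (m : ℝ) * ⟪γ, γ⟫_ℝ / 2 := by
    field_simp at hm; linarith
  have hnα := real_inner_self_eq_norm_mul_norm α
  have hnγ := real_inner_self_eq_norm_mul_norm γ
  have hnorm : ‖α‖ = ‖γ‖ := by
    nlinarith [norm_nonneg α, norm_nonneg γ]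
  have hcs : |⟪α, γ⟫_ℝ| ≤ ⟪γ, γ⟫_ℝ := by
    calc |⟪α, γ⟫_ℝ| ≤ ‖α‖ * ‖γ‖ := abs_real_inner_le_norm α γ
    _ = ⟪γ, γ⟫_ℝ := by rw [hnorm, ← real_inner_self_eq_norm_mul_norm γ]
  have hm2 : |(m:ℝ)| ≤ 2 := by
    rw [abs_le] at hcs ⊢
    constructor <;> nlinarith [hcs.1, hcs.2]
  have hm2' : (-2:ℤ) ≤ m ∧ m ≤ 2 := by
    rw [abs_le] at hm2; exact_mod_cast hm2
  have hne2 : m ≠ 2 := by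
    intro hm2''
    apply h1
    have : ⟪α - γ, α - γ⟫_ℝ = 0 := by
      have hc : ⟪γ, α⟫_ℝ = ⟪α, γ⟫_ℝ := (real_inner_comm γ α).symm
      rw [inner_sub_sub_self, hc, hval, hm2'']
      push_cast; linarith [hsame]
    have := inner_self_eq_zero.mp this
    rw [sub_eq_zero] at this; exact this
  have hnem2 : m ≠ -2 := by
    intro hm2''
    apply h2
    have : ⟪α + γ, α + γ⟫_ℝ = 0 := by
      have hc : ⟪γ, α⟫_ℝ = ⟪α, γ⟫_ℝ := (real_inner_comm γ α).symm
      rw [inner_add_add_self, hc, hval, hm2'']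
      push_cast; linarith [hsame]
    have := inner_self_eq_zero.mp this
    rw [add_eq_zero_iff_eq_neg] at this; exact this
  obtain ⟨hml, hmr⟩ := hm2'
  interval_cases m
  · exact absurd rfl hnem2
  · left; rw [hval]; push_cast; ring
  · right; left; rw [hval]; push_cast; ring
  · right; right; rw [hval]; push_cast; ring
  · exact absurd rfl hne2

lemma coeff_unique {α : V} (hα : α ∈ P.roots) (c : V → ℝ)
    (h : α = ∑ δ ∈ P.base, c δ • δ) : ∀ δ ∈ P.base, P.coeff α δ = c δ := by
  have h0 : ∑ δ ∈ P.base, (P.coeff α δ - c δ) • δ = 0 := by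
    simp only [sub_smul, Finset.sum_sub_distrib]
    rw [← P.coeff_spec α hα, ← h, sub_self]
  intro δ hδ
  have hli := Fintype.linearIndependent_iff.mp P.base_indep
    (fun i : {x // x ∈ P.base} => P.coeff α i.val - c i.val)
  have hz : ∑ i : {x // x ∈ P.base}, (P.coeff α i.val - c i.val) • i.val = 0 := by
    rw [Finset.univ_eq_attach, Finset.sum_attach P.base
      (fun δ => (P.coeff α δ - c δ) • δ)]
    exact h0
  have := hli hz ⟨δ, hδ⟩
  linarith [this]

lemma sum_ind {γ : V} (hγ : γ ∈ P.base) :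
    ∑ δ ∈ P.base, (if δ = γ then (1:ℝ) else 0) • δ = γ := by
  rw [Finset.sum_congr rfl (fun δ _ => by
    rw [ite_smul, one_smul, zero_smul])]
  rw [Finset.sum_ite_eq' P.base γ (fun δ => δ), if_pos hγ]

lemma coeff_simple {γ : V} (hγ : γ ∈ P.base) :
    ∀ δ ∈ P.base, P.coeff γ δ = if δ = γ then 1 else 0 :=
  P.coeff_unique (P.base_subset hγ) _ (P.sum_ind hγ).symm

lemma base_ne_neg {β γ : V} (hβ : β ∈ P.base) (hγ : γ ∈ P.base) : β ≠ -γ := by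
  intro h
  have h1 := P.coeff_simple hβ β hβ
  rw [if_pos rfl] at h1
  have h2 := P.coeff_unique (P.base_subset hβ)
    (fun δ => -(if δ = γ then (1:ℝ) else 0)) (by
      rw [h, Finset.sum_congr rfl (fun δ _ => by rw [neg_smul]),
        Finset.sum_neg_distrib, P.sum_ind hγ]) β hβ
  rw [h1] at h2
  by_cases hbg : β = γ
  · rw [if_pos hbg] at h2; norm_num at h2
  · rw [if_neg hbg] at h2; norm_num at h2

lemma inner_base_nonpos {β γ : V} (hβ : β ∈ P.base) (hγ : γ ∈ P.base)
    (hne : β ≠ γ) : ⟪β, γ⟫_ℝ ≤ 0 := by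
  by_contra hpos
  push_neg at hpos
  have hβr := P.base_subset hβ
  have hγr := P.base_subset hγ
  have hγγ := P.inner_self_pos' hγr
  rcases P.inner_trichot hβr hγr hne (P.base_ne_neg hβ hγ) with h | h | h
  · linarith
  · linarith
  · have hmem : β - γ ∈ P.roots := P.sub_mem' hβr hγr h
    have hc := P.coeff_unique hmem
      (fun δ => (if δ = β then (1:ℝ) else 0) - (if δ = γ then 1 else 0)) (by
        rw [Finset.sum_congr rfl (fun δ _ => by rw [sub_smul]),
          Finset.sum_sub_distrib, P.sum_ind hβ, P.sum_ind hγ])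
    rcases P.coeff_sign _ hmem with hs | hs
    · have h3 := hs γ hγ
      rw [hc γ hγ] at h3
      simp [Ne.symm hne] at h3
      linarith
    · have h3 := hs β hβ
      rw [hc β hβ] at h3
      simp [hne] at h3
      linarith

lemma inner_left_eq {α : V} (hα : α ∈ P.roots) (x : V) :
    ⟪α, x⟫_ℝ = ∑ δ ∈ P.base, P.coeff α δ * ⟪δ, x⟫_ℝ := by
  conv_lhs => rw [P.coeff_spec α hα]
  rw [sum_inner]
  exact Finset.sum_congr rfl (fun δ _ => real_inner_smul_left _ _ _)

end SimplyLacedRootSystem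

namespace SimplyLacedRootSystem

variable (P : SimplyLacedRootSystem V)

lemma one_le_coeff {α δ : V} (hα : α ∈ P.roots) (hδ : δ ∈ P.base)
    (h : 0 < P.coeff α δ) : 1 ≤ P.coeff α δ := by
  obtain ⟨m, hm⟩ := P.coeff_int α hα δ hδ
  rw [hm] at h ⊢
  exact_mod_cast (by exact_mod_cast h : (0:ℤ) < m)

lemma sum_ind_smul {γ : V} (hγ : γ ∈ P.base) (t : ℝ) :
    ∑ δ ∈ P.base, (if δ = γ then t else 0) • δ = t • γ := by
  rw [Finset.sum_congr rfl (fun δ _ => by rw [ite_smul, zero_smul]),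
    Finset.sum_ite_eq' P.base γ (fun δ => t • δ), if_pos hγ]

lemma rle_of_coeffs {x y : V} (f : V → ℝ) (hf : ∀ δ ∈ P.base, 0 ≤ f δ)
    (hxy : y - x = ∑ δ ∈ P.base, f δ • δ) : P.rle x y := by
  refine ⟨fun δ => if δ ∈ P.base then f δ else 0, fun δ => ?_, ?_⟩
  · show 0 ≤ if δ ∈ P.base then f δ else 0
    by_cases hδ : δ ∈ P.base
    · rw [if_pos hδ]; exact hf δ hδ
    · rw [if_neg hδ]
  · rw [hxy]
    exact (Finset.sum_congr rfl (fun δ hδ => by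
      show (if δ ∈ P.base then f δ else 0) • δ = f δ • δ
      rw [if_pos hδ])).symm

lemma key : ∀ n : ℕ, ∀ α ∈ P.pos, (∑ δ ∈ P.base, P.coeff α δ) ≤ (n : ℝ) →
    ∀ β ∈ P.base, ⟪α, β⟫_ℝ < 0 → P.coeff α β = 1 →
    ∃ α' ∈ P.pos, P.rle α' α ∧ 0 < ⟪α', β⟫_ℝ ∧ ⟪α, α'⟫_ℝ = 0 := by
  intro n
  induction n with
  | zero =>
    intro α hα hsum β hβ hneg hone
    exfalso
    have h1 : (1:ℝ) ≤ ∑ δ ∈ P.base, P.coeff α δ := by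
      rw [← hone]
      exact Finset.single_le_sum (fun δ hδ => hα.2 δ hδ) hβ
    norm_num at hsum
    linarith
  | succ n ih =>
    intro α hα hsum β hβ hneg hone
    have hαr : α ∈ P.roots := hα.1
    have hβr : β ∈ P.roots := P.base_subset hβ
    have hL : 0 < ⟪β, β⟫_ℝ := P.inner_self_pos' hβr
    have hαβ1 : α ≠ β := fun h => by rw [h] at hneg; linarith
    have hαβ2 : α ≠ -β := by
      intro h
      have h2 := P.coeff_unique hαr (fun δ => -(if δ = β then (1:ℝ) else 0)) (by
        rw [h, Finset.sum_congr rfl (fun δ _ => by rw [neg_smul]),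
          Finset.sum_neg_distrib, P.sum_ind hβ]) β hβ
      simp only at h2
      rw [hone] at h2
      norm_num at h2
    have hαβ : ⟪α, β⟫_ℝ = -(⟪β, β⟫_ℝ / 2) := by
      rcases P.inner_trichot hαr hβr hαβ1 hαβ2 with h | h | h
      · exact h
      · linarith
      · linarith
    by_cases hcase : ∃ β' ∈ P.base, 0 < P.coeff α β' ∧ ⟪β, β'⟫_ℝ < 0 ∧ 0 < ⟪α, β'⟫_ℝ
    · -- Case 1: a simple neighbor β' of β in the support with (α,β') > 0
      obtain ⟨β', hβ'b, hnb, hbb', hab'⟩ := hcase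
      have hβ'r : β' ∈ P.roots := P.base_subset hβ'b
      have hβ'β' : ⟪β', β'⟫_ℝ = ⟪β, β⟫_ℝ := P.simplyLaced β' hβ'r β hβr
      have hne : β ≠ β' := fun h => by rw [← h] at hbb'; linarith
      have hbb : ⟪β, β'⟫_ℝ = -(⟪β, β⟫_ℝ / 2) := by
        rcases P.inner_trichot hβr hβ'r hne (P.base_ne_neg hβ hβ'b) with h | h | h
        · rw [h, hβ'β']
        · linarith
        · rw [hβ'β'] at h; linarith
      have hane1 : α ≠ β' := by
        intro h
        have h2 := P.coeff_simple hβ'b β hβ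
        rw [← h, hone, if_neg (Ne.symm hαβ1)] at h2
        norm_num at h2
      have hane2 : α ≠ -β' := by
        intro h
        rw [h, inner_neg_left] at hab'
        have := P.inner_self_pos' hβ'r
        linarith
      have hab : ⟪α, β'⟫_ℝ = ⟪β, β⟫_ℝ / 2 := by
        rcases P.inner_trichot hαr hβ'r hane1 hane2 with h | h | h
        · rw [hβ'β'] at h; linarith
        · linarith
        · rw [hβ'β'] at h; exact h
      have hmem : β + β' ∈ P.roots := P.add_mem' hβr hβ'r (by rw [hbb, hβ'β'])
      have hcoef := P.coeff_unique hmem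
        (fun δ => (if δ = β then (1:ℝ) else 0) + (if δ = β' then 1 else 0)) (by
          rw [Finset.sum_congr rfl (fun δ _ => by rw [add_smul]),
            Finset.sum_add_distrib, P.sum_ind hβ, P.sum_ind hβ'b])
      have h1β' : (1:ℝ) ≤ P.coeff α β' := P.one_le_coeff hαr hβ'b hnb
      refine ⟨β + β', ⟨hmem, fun δ hδ => ?_⟩, ?_, ?_, ?_⟩
      · have hx := hcoef δ hδ
        rw [hx]
        split_ifs <;> norm_num
      · refine P.rle_of_coeffs
          (fun δ => P.coeff α δ - ((if δ = β then 1 else 0) + (if δ = β' then 1 else 0)))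
          (fun δ hδ => ?_) ?_
        · by_cases h1 : δ = β
          · subst h1
            rw [hone, if_pos rfl, if_neg hne]
            norm_num
          · by_cases h2 : δ = β'
            · subst h2
              rw [if_neg h1, if_pos rfl]
              linarith
            · rw [if_neg h1, if_neg h2]
              have := hα.2 δ hδ
              linarith
        · have hsplit : ∑ δ ∈ P.base,
              (P.coeff α δ - ((if δ = β then (1:ℝ) else 0) + (if δ = β' then 1 else 0))) • δ
              = (∑ δ ∈ P.base, P.coeff α δ • δ)
                - ((∑ δ ∈ P.base, (if δ = β then (1:ℝ) else 0) • δ)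
                  + ∑ δ ∈ P.base, (if δ = β' then (1:ℝ) else 0) • δ) := by
            simp only [sub_smul, add_smul, Finset.sum_sub_distrib, Finset.sum_add_distrib]
          rw [hsplit, ← P.coeff_spec α hαr, P.sum_ind hβ, P.sum_ind hβ'b]
      · rw [inner_add_left]
        have hc : ⟪β', β⟫_ℝ = ⟪β, β'⟫_ℝ := real_inner_comm β β'
        rw [hc, hbb]
        linarith
      · rw [inner_add_right, hαβ, hab]; ring
    · -- Case 2
      push_neg at hcase
      have hαα : 0 < ⟪α, α⟫_ℝ := P.inner_self_pos' hαr
      have hsum2 : ⟪α, α⟫_ℝ = ∑ δ ∈ P.base, P.coeff α δ * ⟪δ, α⟫_ℝ := P.inner_left_eq hαr α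
      have hex : ∃ δ ∈ P.base, 0 < P.coeff α δ * ⟪δ, α⟫_ℝ := by
        by_contra hno
        push_neg at hno
        have := Finset.sum_nonpos hno
        rw [← hsum2] at this
        linarith
      obtain ⟨γ, hγb, hγp⟩ := hex
      have hγr : γ ∈ P.roots := P.base_subset hγb
      have hcγ : 0 < P.coeff α γ := by
        rcases (hα.2 γ hγb).lt_or_eq with h | h
        · exact h
        · exfalso; rw [← h] at hγp; simp at hγp
      have haγ : 0 < ⟪α, γ⟫_ℝ := by
        have h2 : 0 < ⟪γ, α⟫_ℝ := by
          rcases mul_pos_iff.mp hγp with ⟨_, h⟩ | ⟨h, _⟩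
          · exact h
          · linarith
        have h3 : ⟪γ, α⟫_ℝ = ⟪α, γ⟫_ℝ := real_inner_comm α γ
        linarith
      have hγβ : γ ≠ β := by
        intro h
        rw [h] at haγ
        linarith
      have hβγ0 : ⟪β, γ⟫_ℝ = 0 := by
        have hle : ⟪γ, β⟫_ℝ ≤ 0 := P.inner_base_nonpos hγb hβ hγβ
        have hc : ⟪β, γ⟫_ℝ = ⟪γ, β⟫_ℝ := real_inner_comm γ β
        rcases (hc ▸ hle).lt_or_eq with h | h
        · exact absurd haγ (not_lt.mpr (hcase γ hγb hcγ h))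
        · exact h
      have hγβ0 : ⟪γ, β⟫_ℝ = 0 := by
        have hc : ⟪γ, β⟫_ℝ = ⟪β, γ⟫_ℝ := real_inner_comm β γ
        rw [hc, hβγ0]
      have hαγ1 : α ≠ γ := by
        intro h
        have h2 := P.coeff_simple hγb β hβ
        rw [← h, hone, if_neg (Ne.symm hαβ1)] at h2
        norm_num at h2
      have hαγ2 : α ≠ -γ := by
        intro h
        rw [h, inner_neg_left] at haγ
        have := P.inner_self_pos' hγr
        linarith
      have hγγL : ⟪γ, γ⟫_ℝ = ⟪β, β⟫_ℝ := P.simplyLaced γ hγr β hβr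
      have haγval : ⟪α, γ⟫_ℝ = ⟪β, β⟫_ℝ / 2 := by
        rcases P.inner_trichot hαr hγr hαγ1 hαγ2 with h | h | h
        · rw [hγγL] at h; linarith
        · linarith
        · rw [hγγL] at h; exact h
      have hα₁r : α - γ ∈ P.roots := P.sub_mem' hαr hγr (by rw [haγval, hγγL])
      have hcoef₁ := P.coeff_unique hα₁r
        (fun δ => P.coeff α δ - (if δ = γ then 1 else 0)) (by
          rw [Finset.sum_congr rfl (fun δ _ => by rw [sub_smul]), Finset.sum_sub_distrib,
            ← P.coeff_spec α hαr, P.sum_ind hγb])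
      have h1γ : (1:ℝ) ≤ P.coeff α γ := P.one_le_coeff hαr hγb hcγ
      have hα₁pos : α - γ ∈ P.pos := by
        refine ⟨hα₁r, fun δ hδ => ?_⟩
        have hx := hcoef₁ δ hδ
        rw [hx]
        have := hα.2 δ hδ
        by_cases h1 : δ = γ
        · rw [if_pos h1, h1]; linarith
        · rw [if_neg h1]; linarith
      have hsum₁ : ∑ δ ∈ P.base, P.coeff (α - γ) δ ≤ (n:ℝ) := by
        have heq : ∑ δ ∈ P.base, P.coeff (α - γ) δ
            = ∑ δ ∈ P.base, (P.coeff α δ - (if δ = γ then (1:ℝ) else 0)) := by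
          refine Finset.sum_congr rfl (fun δ hδ => ?_)
          have hx := hcoef₁ δ hδ
          rw [hx]
        rw [heq, Finset.sum_sub_distrib,
          Finset.sum_ite_eq' P.base γ (fun _ => (1:ℝ)), if_pos hγb]
        push_cast at hsum
        linarith
      have hα₁β : ⟪α - γ, β⟫_ℝ < 0 := by
        rw [inner_sub_left, hγβ0]
        linarith
      have hα₁one : P.coeff (α - γ) β = 1 := by
        have hx := hcoef₁ β hβ
        rw [hx, if_neg (fun h : β = γ => hγβ h.symm), hone]
        ring
      obtain ⟨α', hα'pos, hα'rle, hα'β, hα'orth⟩ := ih (α - γ) hα₁pos hsum₁ β hβ hα₁β hα₁one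
      have hα'r : α' ∈ P.roots := hα'pos.1
      have hα'γ1 : α' ≠ γ := by
        intro h
        rw [h, hγβ0] at hα'β
        linarith
      have hα'γ2 : α' ≠ -γ := by
        intro h
        rw [h, inner_neg_left, hγβ0] at hα'β
        linarith
      have hαα' : ⟪α, α'⟫_ℝ = ⟪γ, α'⟫_ℝ := by
        have hdec : α = (α - γ) + γ := by abel
        conv_lhs => rw [hdec]
        rw [inner_add_left, hα'orth, zero_add]
      have hcomγ : ⟪γ, α'⟫_ℝ = ⟪α', γ⟫_ℝ := real_inner_comm α' γ
      obtain ⟨c, hc0, hcsum⟩ := hα'rle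
      rcases P.inner_trichot hα'r hγr hα'γ1 hα'γ2 with hc3 | hc3 | hc3
      · -- ⟪α',γ⟫ = -(⟪γ,γ⟫/2) : take α' + γ
        have hmem'' : α' + γ ∈ P.roots := P.add_mem' hα'r hγr hc3
        have hcoef'' := P.coeff_unique hmem''
          (fun δ => P.coeff α' δ + (if δ = γ then 1 else 0)) (by
            rw [Finset.sum_congr rfl (fun δ _ => by rw [add_smul]), Finset.sum_add_distrib,
              ← P.coeff_spec α' hα'r, P.sum_ind hγb])
        refine ⟨α' + γ, ⟨hmem'', fun δ hδ => ?_⟩, ?_, ?_, ?_⟩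
        · have hx := hcoef'' δ hδ
          rw [hx]
          have := hα'pos.2 δ hδ
          split_ifs <;> linarith
        · refine P.rle_of_coeffs c (fun δ _ => hc0 δ) ?_
          rw [← hcsum]; abel
        · rw [inner_add_left, hγβ0]
          linarith
        · rw [inner_add_right, hαα', haγval, hcomγ, hc3, hγγL]
          ring
      · -- ⟪α',γ⟫ = 0 : take α'
        refine ⟨α', hα'pos, ?_, hα'β, ?_⟩
        · refine P.rle_of_coeffs (fun δ => c δ + (if δ = γ then 1 else 0))
            (fun δ _ => by split_ifs <;> linarith [hc0 δ]) ?_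
          have hsplit : ∑ δ ∈ P.base, ((c δ + (if δ = γ then (1:ℝ) else 0)) • δ)
              = (∑ δ ∈ P.base, c δ • δ) + ∑ δ ∈ P.base, (if δ = γ then (1:ℝ) else 0) • δ := by
            simp only [add_smul, Finset.sum_add_distrib]
          rw [hsplit, ← hcsum, P.sum_ind hγb]
          abel
        · rw [hαα', hcomγ, hc3]
      · -- ⟪α',γ⟫ = ⟪γ,γ⟫/2 : take α' - γ
        have hmem'' : α' - γ ∈ P.roots := P.sub_mem' hα'r hγr hc3
        have hcoef'' := P.coeff_unique hmem''
          (fun δ => P.coeff α' δ - (if δ = γ then 1 else 0)) (by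
            rw [Finset.sum_congr rfl (fun δ _ => by rw [sub_smul]), Finset.sum_sub_distrib,
              ← P.coeff_spec α' hα'r, P.sum_ind hγb])
        have hpos'' : α' - γ ∈ P.pos := by
          rcases P.coeff_sign _ hmem'' with hs | hs
          · exact ⟨hmem'', hs⟩
          · exfalso
            have hz : ∀ δ ∈ P.base, δ ≠ γ → P.coeff α' δ = 0 := by
              intro δ hδ hδγ
              have h1 := hs δ hδ
              have hx := hcoef'' δ hδ
              rw [hx, if_neg hδγ] at h1
              have h2 := hα'pos.2 δ hδ
              linarith
            have hrep : α' = P.coeff α' γ • γ := by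
              conv_lhs => rw [P.coeff_spec α' hα'r]
              rw [Finset.sum_eq_single γ
                (fun δ hδ hδγ => by rw [hz δ hδ hδγ, zero_smul])
                (fun h => absurd hγb h)]
            rcases P.reduced γ hγr (P.coeff α' γ) (by rw [← hrep]; exact hα'r) with h | h
            · rw [h, one_smul] at hrep; exact hα'γ1 hrep
            · rw [h] at hrep
              rw [show (-1 : ℝ) • γ = -γ from neg_one_smul ℝ γ] at hrep
              exact hα'γ2 hrep
        refine ⟨α' - γ, hpos'', ?_, ?_, ?_⟩
        · refine P.rle_of_coeffs (fun δ => c δ + (if δ = γ then 2 else 0))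
            (fun δ _ => by split_ifs <;> linarith [hc0 δ]) ?_
          have hsplit : ∑ δ ∈ P.base, ((c δ + (if δ = γ then (2:ℝ) else 0)) • δ)
              = (∑ δ ∈ P.base, c δ • δ) + ∑ δ ∈ P.base, (if δ = γ then (2:ℝ) else 0) • δ := by
            simp only [add_smul, Finset.sum_add_distrib]
          rw [hsplit, ← hcsum, P.sum_ind_smul hγb 2, two_smul]
          abel
        · rw [inner_sub_left, hγβ0]
          linarith
        · rw [inner_sub_right, hαα', haγval, hcomγ, hc3, hγγL]
          ring

end SimplyLacedRootSystem

/-- Let α ∈ R⁺ and let β ∈ Δ(α) be such that (α,β) < 0 and n_β(α) = 1.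
Then there exists α' ∈ R⁺ such that α' ≤ α, (α',β) > 0, and (α,α') = 0. -/
theorem stmt10 (P : SimplyLacedRootSystem V) (α : V) (hα : α ∈ P.pos)
    (β : V) (hβ : β ∈ P.support α) (hneg : ⟪α, β⟫_ℝ < 0) (hone : P.coeff α β = 1) :
    ∃ α' ∈ P.pos, P.rle α' α ∧ 0 < ⟪α', β⟫_ℝ ∧ ⟪α, α'⟫_ℝ = 0 := by
  have hβb : β ∈ P.base := (Finset.mem_filter.mp hβ).1
  obtain ⟨n, hn⟩ := exists_nat_ge (∑ δ ∈ P.base, P.coeff α δ)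
  exact P.key n α hα hn β hβb hneg hone
end
end

section
/- Let v ∈ W, let β ∈ A_ℓ(v), and let α ∈ A(s_β v) with (α,β) ≥ 0. Then α ∈ A(v) and β ∈ D(s_α s_β v). -/
/- Setting: a reduced, irreducible, crystallographic, simply laced root system `roots`
in a real inner product space `V`, with a fixed base `base` of simple roots,
its Weyl group (generated by the reflections in the simple roots), the length
function, the (strong) Bruhat order, the weak left Bruhat order, the sets
`A_ℓ(v)`, `A(v)`, `D(w)`, `AD(v,w)`, and the partial order on roots induced
by the base. -/

open scoped InnerProductSpace Classical

noncomputable section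

variable {V : Type*} [NormedAddCommGroup V] [InnerProductSpace ℝ V]

section Aux

lemma sRefl_apply (α x : V) : sRefl α x = x - (2 * ⟪x, α⟫_ℝ / ⟪α, α⟫_ℝ) • α := rfl

lemma sRefl_mul_self (α : V) : sRefl α * sRefl α = 1 := by
  ext x
  exact reflMap_involutive α x

lemma sRefl_inv (α : V) : (sRefl α)⁻¹ = sRefl α :=
  inv_eq_of_mul_eq_one_left (sRefl_mul_self α)

lemma sRefl_inner (α x y : V) : ⟪sRefl α x, sRefl α y⟫_ℝ = ⟪x, y⟫_ℝ := by
  by_cases h : (⟪α, α⟫_ℝ) = (0 : ℝ)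
  · have hα : α = 0 := inner_self_eq_zero.mp h
    simp [sRefl_apply, hα]
  · rw [sRefl_apply, sRefl_apply]
    simp only [inner_sub_left, inner_sub_right, real_inner_smul_left, real_inner_smul_right]
    rw [real_inner_comm α y]
    field_simp
    ring

lemma sRefl_self (α : V) (hα : α ≠ 0) : sRefl α α = -α := by
  have h : (⟪α, α⟫_ℝ) ≠ 0 := fun h => hα (inner_self_eq_zero.mp h)
  rw [sRefl_apply]
  rw [show 2 * ⟪α, α⟫_ℝ / ⟪α, α⟫_ℝ = 2 by field_simp]
  module

lemma sRefl_conj (w : V ≃ₗ[ℝ] V) (hw : ∀ x y, ⟪w x, w y⟫_ℝ = ⟪x, y⟫_ℝ) (γ : V) :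
    sRefl (w γ) = w * sRefl γ * w⁻¹ := by
  ext x
  show sRefl (w γ) x = w (sRefl γ (w⁻¹ x))
  rw [sRefl_apply, sRefl_apply, map_sub, map_smul]
  have h1 : ⟪w⁻¹ x, γ⟫_ℝ = ⟪x, w γ⟫_ℝ := by
    rw [← hw (w⁻¹ x) γ, show w (w⁻¹ x) = x from w.apply_symm_apply x]
  have h2 : ⟪γ, γ⟫_ℝ = ⟪w γ, w γ⟫_ℝ := (hw γ γ).symm
  rw [h1, h2, show w (w⁻¹ x) = x from w.apply_symm_apply x]

end Aux

namespace SimplyLacedRootSystem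

variable (P : SimplyLacedRootSystem V)

lemma sum_eq_zero_coeff (c : V → ℝ) (h : ∑ β ∈ P.base, c β • β = 0) :
    ∀ β ∈ P.base, c β = 0 := by
  have hli := Fintype.linearIndependent_iff.mp P.base_indep (fun b => c b.val)
  have h2 : ∑ b : {x : V // x ∈ P.base}, c b.val • (b.val : V) = 0 := by
    rw [Finset.univ_eq_attach, Finset.sum_attach P.base (fun β => c β • β)]
    exact h
  intro β hβ
  exact hli h2 ⟨β, hβ⟩

lemma coeff_eq_of_repr {α : V} (hα : α ∈ P.roots) (c : V → ℝ)
    (h : α = ∑ β ∈ P.base, c β • β) : ∀ β ∈ P.base, P.coeff α β = c β := by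
  intro β hβ
  have h0 : ∑ β' ∈ P.base, (P.coeff α β' - c β') • β' = 0 := by
    simp only [sub_smul, Finset.sum_sub_distrib]
    rw [← P.coeff_spec α hα, ← h, sub_self]
  have := P.sum_eq_zero_coeff _ h0 β hβ
  linarith

lemma neg_root {α : V} (hα : α ∈ P.roots) : -α ∈ P.roots := by
  rw [← sRefl_self α (P.nonzero α hα)]
  exact P.reflect_mem α hα α hα

lemma coeff_neg {α : V} (hα : α ∈ P.roots) : ∀ β ∈ P.base, P.coeff (-α) β = -P.coeff α β := by
  apply P.coeff_eq_of_repr (P.neg_root hα)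
  rw [show (-α : V) = -(∑ β ∈ P.base, P.coeff α β • β) by rw [← P.coeff_spec α hα],
    ← Finset.sum_neg_distrib]
  exact Finset.sum_congr rfl (fun β _ => by rw [neg_smul])

lemma root_pos_or_neg {α : V} (hα : α ∈ P.roots) : α ∈ P.pos ∨ -α ∈ P.pos := by
  rcases P.coeff_sign α hα with h | h
  · exact Or.inl ⟨hα, h⟩
  · refine Or.inr ⟨P.neg_root hα, fun β hβ => ?_⟩
    rw [P.coeff_neg hα β hβ]
    linarith [h β hβ]

lemma pos_neg_disjoint {α : V} (h1 : α ∈ P.pos) (h2 : -α ∈ P.pos) : False := by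
  have hz : ∀ β ∈ P.base, P.coeff α β = 0 := by
    intro β hβ
    have := h2.2 β hβ
    rw [P.coeff_neg h1.1 β hβ] at this
    linarith [h1.2 β hβ]
  apply P.nonzero α h1.1
  rw [P.coeff_spec α h1.1]
  exact Finset.sum_eq_zero fun β hβ => by rw [hz β hβ, zero_smul]

lemma coeff_base {β : V} (hβ : β ∈ P.base) :
    ∀ β' ∈ P.base, P.coeff β β' = if β' = β then 1 else 0 := by
  apply P.coeff_eq_of_repr (P.base_subset hβ)
  rw [Finset.sum_congr rfl (fun β' _ => by rw [ite_smul, one_smul, zero_smul]),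
    Finset.sum_ite_eq' P.base β (fun β' => β'), if_pos hβ]

lemma base_pos {β : V} (hβ : β ∈ P.base) : β ∈ P.pos := by
  refine ⟨P.base_subset hβ, fun β' hβ' => ?_⟩
  rw [P.coeff_base hβ β' hβ']
  split <;> norm_num

lemma root_inner_pos {α : V} (hα : α ∈ P.roots) : 0 < ⟪α, α⟫_ℝ :=
  lt_of_le_of_ne real_inner_self_nonneg
    (fun h => P.nonzero α hα (inner_self_eq_zero.mp h.symm))

lemma pos_add_pos {x y : V} (hx : x ∈ P.pos) (hy : y ∈ P.pos) (hxy : x + y ∈ P.roots) :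
    x + y ∈ P.pos := by
  refine ⟨hxy, fun β hβ => ?_⟩
  have : P.coeff (x + y) β = P.coeff x β + P.coeff y β := by
    refine P.coeff_eq_of_repr hxy (fun β => P.coeff x β + P.coeff y β) ?_ β hβ
    simp only [add_smul, Finset.sum_add_distrib]
    rw [← P.coeff_spec x hx.1, ← P.coeff_spec y hy.1]
  rw [this]
  exact add_nonneg (hx.2 β hβ) (hy.2 β hβ)

/-- A simple reflection permutes the positive roots other than its own simple root. -/
lemma sRefl_pos_of_ne {β : V} (hβ : β ∈ P.base) {γ : V} (hγ : γ ∈ P.pos) (hne : γ ≠ β) :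
    sRefl β γ ∈ P.pos := by
  have hγr : γ ∈ P.roots := hγ.1
  have hδ : sRefl β γ ∈ P.roots := P.reflect_mem β (P.base_subset hβ) γ hγr
  set t : ℝ := 2 * ⟪γ, β⟫_ℝ / ⟪β, β⟫_ℝ with ht
  have hc : ∀ β' ∈ P.base,
      P.coeff (sRefl β γ) β' = if β' = β then P.coeff γ β - t else P.coeff γ β' := by
    apply P.coeff_eq_of_repr hδ
    have key : ∀ β' ∈ P.base,
        (if β' = β then P.coeff γ β - t else P.coeff γ β') • β'
          = P.coeff γ β' • β' - (if β' = β then t • β' else 0) := by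
      intro β' _
      by_cases h : β' = β
      · subst h; simp [sub_smul]
      · simp [h]
    rw [Finset.sum_congr rfl key, Finset.sum_sub_distrib,
      Finset.sum_ite_eq' P.base β (fun β' => t • β'), if_pos hβ,
      ← P.coeff_spec γ hγr, sRefl_apply]
  rcases P.root_pos_or_neg hδ with hpos | hneg
  · exact hpos
  · exfalso
    have hzero : ∀ β' ∈ P.base, β' ≠ β → P.coeff γ β' = 0 := by
      intro β' hβ' hne'
      have h1 := hneg.2 β' hβ'
      rw [P.coeff_neg hδ β' hβ', hc β' hβ', if_neg hne'] at h1
      linarith [hγ.2 β' hβ']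
    have hγβ : γ = P.coeff γ β • β := by
      conv_lhs => rw [P.coeff_spec γ hγr]
      exact Finset.sum_eq_single_of_mem β hβ
        (fun b hb hb' => by rw [hzero b hb hb', zero_smul])
    rcases P.reduced β (P.base_subset hβ) (P.coeff γ β) (hγβ ▸ hγr) with h1 | h1
    · rw [h1, one_smul] at hγβ; exact hne hγβ
    · have := hγ.2 β hβ; rw [h1] at this; linarith

lemma weyl_inner {w : V ≃ₗ[ℝ] V} (hw : w ∈ P.weyl) : ∀ x y, ⟪w x, w y⟫_ℝ = ⟪x, y⟫_ℝ := by
  refine Subgroup.closure_induction (fun x hx => ?_) (fun x y => by simp)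
    (fun a b _ _ ha hb x y => ?_) (fun a _ ha x y => ?_) hw
  · obtain ⟨β, _, rfl⟩ := hx
    exact fun x y => sRefl_inner β x y
  · show ⟪a (b x), a (b y)⟫_ℝ = _
    rw [ha, hb]
  · have := ha (a⁻¹ x) (a⁻¹ y)
    rw [show a (a⁻¹ x) = x from a.apply_symm_apply x,
      show a (a⁻¹ y) = y from a.apply_symm_apply y] at this
    exact this.symm

lemma weyl_root {w : V ≃ₗ[ℝ] V} (hw : w ∈ P.weyl) :
    ∀ γ ∈ P.roots, w γ ∈ P.roots ∧ w⁻¹ γ ∈ P.roots := by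
  refine Subgroup.closure_induction (fun x hx => ?_)
    (fun γ hγ => ⟨hγ, by rw [inv_one]; exact hγ⟩)
    (fun a b _ _ ha hb γ hγ => ?_) (fun a _ ha γ hγ => ?_) hw
  · obtain ⟨β, hβ, rfl⟩ := hx
    intro γ hγ
    have hβr := P.base_subset hβ
    constructor
    · exact P.reflect_mem β hβr γ hγ
    · rw [sRefl_inv]; exact P.reflect_mem β hβr γ hγ
  · constructor
    · show a (b γ) ∈ P.roots
      exact (ha (b γ) (hb γ hγ).1).1
    · rw [mul_inv_rev]
      show b⁻¹ (a⁻¹ γ) ∈ P.roots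
      exact (hb (a⁻¹ γ) (ha γ hγ).2).2
  · rw [inv_inv]
    exact ⟨(ha γ hγ).2, (ha γ hγ).1⟩

lemma prod_map_reverse (l : List V) :
    ((l.map sRefl).prod)⁻¹ = ((l.reverse.map sRefl).prod) := by
  induction l with
  | nil => simp
  | cons a t ih => simp [mul_inv_rev, ih, sRefl_inv]

lemma word_exists {w : V ≃ₗ[ℝ] V} (hw : w ∈ P.weyl) :
    ∃ l : List V, (∀ β ∈ l, β ∈ P.base) ∧ (l.map sRefl).prod = w := by
  refine Subgroup.closure_induction (fun x hx => ?_) ⟨[], by simp, by simp⟩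
    (fun a b _ _ ha hb => ?_) (fun a _ ha => ?_) hw
  · obtain ⟨β, hβ, rfl⟩ := hx
    exact ⟨[β], by simpa using hβ, by simp⟩
  · obtain ⟨l₁, h₁, hp₁⟩ := ha
    obtain ⟨l₂, h₂, hp₂⟩ := hb
    exact ⟨l₁ ++ l₂, fun β hβ => ((List.mem_append.mp hβ).elim (h₁ β) (h₂ β)),
      by rw [List.map_append, List.prod_append, hp₁, hp₂]⟩
  · obtain ⟨l, h, hp⟩ := ha
    exact ⟨l.reverse, fun β hβ => h β (List.mem_reverse.mp hβ),
      by rw [← prod_map_reverse, hp]⟩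

lemma len_le {w : V ≃ₗ[ℝ] V} {l : List V} (hl : ∀ β ∈ l, β ∈ P.base)
    (hp : (l.map sRefl).prod = w) : P.len w ≤ l.length :=
  Nat.sInf_le ⟨l, rfl, hl, hp⟩

lemma len_word {w : V ≃ₗ[ℝ] V} (hw : w ∈ P.weyl) :
    ∃ l : List V, l.length = P.len w ∧ (∀ β ∈ l, β ∈ P.base) ∧ (l.map sRefl).prod = w := by
  obtain ⟨l, hl, hp⟩ := P.word_exists hw
  have hmem : P.len w ∈ {n | ∃ l : List V,
      l.length = n ∧ (∀ β ∈ l, β ∈ P.base) ∧ (l.map sRefl).prod = w} :=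
    Nat.sInf_mem ⟨l.length, ⟨l, rfl, hl, hp⟩⟩
  exact hmem

/-- The exchange property. -/
lemma exchange : ∀ (l : List V), (∀ β ∈ l, β ∈ P.base) → ∀ γ ∈ P.pos,
    -(((l.map sRefl).prod)⁻¹ γ) ∈ P.pos →
    ∃ l' : List V, (∀ β ∈ l', β ∈ P.base) ∧
      (l'.map sRefl).prod = sRefl γ * (l.map sRefl).prod ∧ l'.length + 1 = l.length := by
  intro l
  induction l with
  | nil =>
    intro _ γ hγ hneg
    exfalso
    simp only [List.map_nil, List.prod_nil, inv_one] at hneg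
    exact P.pos_neg_disjoint hγ hneg
  | cons β₁ t ih =>
    intro hl γ hγ hneg
    have hβ₁ : β₁ ∈ P.base := hl β₁ List.mem_cons_self
    set u : V ≃ₗ[ℝ] V := (t.map sRefl).prod with hu
    have hprod : ((β₁ :: t).map sRefl).prod = sRefl β₁ * u := by
      simp [hu]
    by_cases hcase : γ = β₁
    · refine ⟨t, fun β hβ => hl β (List.mem_cons_of_mem β₁ hβ), ?_, by simp⟩
      rw [hprod, hcase, ← mul_assoc, sRefl_mul_self, one_mul]
    · have hγ' : sRefl β₁ γ ∈ P.pos := P.sRefl_pos_of_ne hβ₁ hγ hcase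
      have hneg' : -(u⁻¹ (sRefl β₁ γ)) ∈ P.pos := by
        have : ((β₁ :: t).map sRefl).prod⁻¹ γ = u⁻¹ (sRefl β₁ γ) := by
          rw [hprod, mul_inv_rev, sRefl_inv]
          rfl
        rwa [this] at hneg
      obtain ⟨l'', hl''base, hl''prod, hl''len⟩ :=
        ih (fun β hβ => hl β (List.mem_cons_of_mem β₁ hβ)) (sRefl β₁ γ) hγ' hneg'
      have hconj : sRefl β₁ * sRefl (sRefl β₁ γ) = sRefl γ * sRefl β₁ := by
        rw [sRefl_conj (sRefl β₁) (sRefl_inner β₁) γ, sRefl_inv,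
          ← mul_assoc, ← mul_assoc, sRefl_mul_self, one_mul]
      refine ⟨β₁ :: l'', ?_, ?_, ?_⟩
      · intro β hβ
        rcases List.mem_cons.mp hβ with h | h
        · subst h; exact hβ₁
        · exact hl''base β h
      · rw [hprod]
        show sRefl β₁ * (l''.map sRefl).prod = sRefl γ * (sRefl β₁ * u)
        rw [hl''prod, ← mul_assoc, hconj, mul_assoc]
      · simp only [List.length_cons]
        omega

lemma len_le_of_ble {u w : V ≃ₗ[ℝ] V} (h : P.ble u w) : P.len u ≤ P.len w := by
  induction h with
  | refl => exact le_refl _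
  | tail _ hstep ih =>
    obtain ⟨α, _, _, hlen⟩ := hstep
    omega

lemma len_lt_of_blt {u w : V ≃ₗ[ℝ] V} (h : P.blt u w) : P.len u < P.len w := by
  obtain ⟨hle, hne⟩ := h
  rcases hle.cases_head with h | ⟨c, hstep, hrest⟩
  · exact absurd h hne
  · obtain ⟨α, _, _, hlen⟩ := hstep
    have := P.len_le_of_ble hrest
    omega

/-- The key lemma: if `v < s_β v` then `v⁻¹ β` is a positive root. -/
lemma inv_simple_pos {v : V ≃ₗ[ℝ] V} (hv : v ∈ P.weyl) {β : V} (hβ : β ∈ P.base)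
    (hlt : P.blt v (sRefl β * v)) : v⁻¹ β ∈ P.pos := by
  have hβr : β ∈ P.roots := P.base_subset hβ
  have hroot : v⁻¹ β ∈ P.roots := (P.weyl_root hv β hβr).2
  rcases P.root_pos_or_neg hroot with hpos | hneg
  · exact hpos
  · exfalso
    obtain ⟨l, hllen, hlbase, hlprod⟩ := P.len_word hv
    obtain ⟨l', hl'base, hl'prod, hl'len⟩ :=
      P.exchange l hlbase β (P.base_pos hβ) (by rw [hlprod]; exact hneg)
    have h1 : P.len (sRefl β * v) ≤ l'.length := P.len_le hl'base (by rw [hl'prod, hlprod])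
    have h2 := P.len_lt_of_blt hlt
    omega

end SimplyLacedRootSystem

/-- Let v ∈ W, let β ∈ A_ℓ(v), and let α ∈ A(s_β v) with (α,β) ≥ 0.
Then α ∈ A(v) and β ∈ D(s_α s_β v). -/
theorem stmt14 (P : SimplyLacedRootSystem V) (v : V ≃ₗ[ℝ] V) (hv : v ∈ P.weyl)
    (β : V) (hβ : β ∈ P.Al v)
    (α : V) (hα : α ∈ P.A (sRefl β * v)) (hip : 0 ≤ ⟪α, β⟫_ℝ) :
    α ∈ P.A v ∧ β ∈ P.Dset (sRefl α * sRefl β * v) := by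
  obtain ⟨hβbase, hblt⟩ := hβ
  have hβr : β ∈ P.roots := P.base_subset hβbase
  have hαpos : α ∈ P.pos := hα.1
  have hαr : α ∈ P.roots := hαpos.1
  have hββ : (0:ℝ) < ⟪β, β⟫_ℝ := P.root_inner_pos hβr
  have hαα : (0:ℝ) < ⟪α, α⟫_ℝ := P.root_inner_pos hαr
  have hsl : ⟪α, α⟫_ℝ = ⟪β, β⟫_ℝ := P.simplyLaced α hαr β hβr
  have hkey : v⁻¹ β ∈ P.pos := P.inv_simple_pos hv hβbase hblt
  have h2 : v⁻¹ (sRefl β α) ∈ P.pos := by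
    have : (sRefl β * v)⁻¹ α = v⁻¹ (sRefl β α) := by
      rw [mul_inv_rev, sRefl_inv]; rfl
    rw [← this]; exact hα.2
  obtain ⟨n, hn⟩ := P.crystallographic β hβr α hαr
  have hn0 : (0:ℝ) ≤ (n:ℝ) := by
    rw [← hn]; positivity
  have hnorm : ‖α‖ = ‖β‖ := by
    have h1 : ⟪α, α⟫_ℝ = ‖α‖ * ‖α‖ := real_inner_self_eq_norm_mul_norm α
    have h2' : ⟪β, β⟫_ℝ = ‖β‖ * ‖β‖ := real_inner_self_eq_norm_mul_norm β
    nlinarith [norm_nonneg α, norm_nonneg β]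
  have hn2 : (n:ℝ) ≤ 2 := by
    rw [← hn]
    have hc : ⟪α, β⟫_ℝ ≤ ‖α‖ * ‖β‖ := real_inner_le_norm α β
    rw [hnorm] at hc
    rw [real_inner_self_eq_norm_mul_norm β] at hββ ⊢
    rw [div_le_iff₀ hββ]
    nlinarith
  have hn0' : (0:ℤ) ≤ n := by exact_mod_cast hn0
  have hn2' : (n:ℤ) ≤ 2 := by exact_mod_cast hn2
  have hsβα : sRefl β α = α - (n:ℝ) • β := by rw [sRefl_apply, hn]
  have hsαβ : sRefl α β = β - (n:ℝ) • α := by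
    rw [sRefl_apply, real_inner_comm α β, hsl, hn]
  have happ : (sRefl α * sRefl β * v)⁻¹ β = v⁻¹ (sRefl β (sRefl α β)) := by
    rw [mul_assoc, mul_inv_rev, mul_inv_rev, sRefl_inv, sRefl_inv]; rfl
  interval_cases n
  · -- n = 0 : (α,β) = 0
    have hs1 : sRefl β α = α := by rw [hsβα]; simp
    have hs2 : sRefl α β = β := by rw [hsαβ]; simp
    have hA : α ∈ P.A v := ⟨hαpos, by rwa [hs1] at h2⟩
    refine ⟨hA, P.base_pos hβbase, ?_⟩
    rw [happ, hs2, sRefl_self β (P.nonzero β hβr), map_neg, neg_neg]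
    exact hkey
  · -- n = 1
    have hs1 : sRefl β α = α - β := by rw [hsβα]; simp
    have hvα : v⁻¹ α = v⁻¹ (sRefl β α) + v⁻¹ β := by
      rw [hs1, map_sub, sub_add_cancel]
    have hAroot : v⁻¹ α ∈ P.roots := (P.weyl_root hv α hαr).2
    have hApos : v⁻¹ α ∈ P.pos := by
      rw [hvα]
      exact P.pos_add_pos h2 hkey (by rw [← hvα]; exact hAroot)
    refine ⟨⟨hαpos, hApos⟩, P.base_pos hβbase, ?_⟩
    have hs3 : sRefl β (sRefl α β) = -α := by
      have hsαβ' : sRefl α β = β - α := by rw [hsαβ]; norm_num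
      rw [hsαβ', map_sub, hs1, sRefl_self β (P.nonzero β hβr)]
      abel
    rw [happ, hs3, map_neg, neg_neg]
    exact hApos
  · -- n = 2 : α = β, contradiction
    exfalso
    have hip2 : ⟪α, β⟫_ℝ = ⟪β, β⟫_ℝ := by
      have : 2 * ⟪α, β⟫_ℝ / ⟪β, β⟫_ℝ = 2 := by rw [hn]; norm_num
      field_simp at this
      linarith
    have hαβ : α = β := by
      have hz : ⟪α - β, α - β⟫_ℝ = 0 := by
        rw [inner_sub_sub_self, real_inner_comm α β]
        rw [hsl, hip2]
        ring
      have := inner_self_eq_zero.mp hz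
      rwa [sub_eq_zero] at this
    rw [hαβ, sRefl_self β (P.nonzero β hβr), map_neg] at h2
    exact P.pos_neg_disjoint hkey h2
end
end
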